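/- (Maligranda's inequality.) Let X₀ and X₁ be Banach lattices of measurable functions on a common measure space, let 1 < p < ∞, and let f ∈ X₀^(p)+X₁^(p). Then for every t > 0, (K(t,|f|^p;X₀,X₁))^{1/p} ≤ K(t^{1/p},f;X₀^(p),X₁^(p)) ≤ 2^{1−1/p}·(K(t,|f|^p;X₀,X₁))^{1/p}. -/

import Mathlib

open MeasureTheory

/-- A Banach lattice of (a.e.-equivalence classes of) real-valued measurable
functions on a measure space `(Ω, μ)`: a linear subspace of `Ω →ₘ[μ] ℝ` with a complete
norm satisfying the lattice (ideal) property. -/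
structure BanachFunctionLattice (Ω : Type*) [MeasurableSpace Ω] (μ : MeasureTheory.Measure Ω) where
  carrier : Set (Ω →ₘ[μ] ℝ)
  norm : (Ω →ₘ[μ] ℝ) → ℝ
  zero_mem : 0 ∈ carrier
  add_mem : ∀ {f g}, f ∈ carrier → g ∈ carrier → f + g ∈ carrier
  smul_mem : ∀ (c : ℝ) {f}, f ∈ carrier → c • f ∈ carrier
  norm_nonneg : ∀ f ∈ carrier, 0 ≤ norm f
  norm_eq_zero_iff : ∀ f ∈ carrier, (norm f = 0 ↔ f = 0)
  norm_add_le : ∀ f ∈ carrier, ∀ g ∈ carrier, norm (f + g) ≤ norm f + norm g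
  norm_smul : ∀ (c : ℝ), ∀ f ∈ carrier, norm (c • f) = |c| * norm f
  ideal_mem : ∀ f ∈ carrier, ∀ g : (Ω →ₘ[μ] ℝ), |g| ≤ |f| → g ∈ carrier
  ideal_norm_le : ∀ f ∈ carrier, ∀ g : (Ω →ₘ[μ] ℝ), |g| ≤ |f| → norm g ≤ norm f
  complete : ∀ u : ℕ → (Ω →ₘ[μ] ℝ), (∀ n, u n ∈ carrier) →
    (∀ ε > 0, ∃ N, ∀ m ≥ N, ∀ n ≥ N, norm (u m - u n) < ε) →
    ∃ f ∈ carrier, ∀ ε > 0, ∃ N, ∀ n ≥ N, norm (u n - f) < ε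

variable {Ω : Type*} [MeasurableSpace Ω] {μ : MeasureTheory.Measure Ω}

/-- The a.e.-equivalence class of `ω ↦ |f ω| ^ p` (real power). -/
noncomputable def absRpow (p : ℝ) (f : Ω →ₘ[μ] ℝ) : Ω →ₘ[μ] ℝ :=
  AEEqFun.mk (fun ω => |f ω| ^ p)
    (((by measurability : Measurable fun x : ℝ => |x| ^ p).comp_aemeasurable
      f.aemeasurable).aestronglyMeasurable)

/-- A (not necessarily complete) normed function space: the data of a carrier and a norm.
Used to speak about `p`-convexifications without re-proving all the axioms. -/
structure FunctionSpace (Ω : Type*) [MeasurableSpace Ω] (μ : MeasureTheory.Measure Ω) where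
  carrier : Set (Ω →ₘ[μ] ℝ)
  norm : (Ω →ₘ[μ] ℝ) → ℝ

/-- The carrier-and-norm data underlying a Banach function lattice. -/
def BanachFunctionLattice.toFunctionSpace (X : BanachFunctionLattice Ω μ) :
    FunctionSpace Ω μ := ⟨X.carrier, X.norm⟩

/-- The `p`-convexification `X^(p)`: all `f` with `|f|^p ∈ X`, with norm `‖|f|^p‖_X^(1/p)`. -/
noncomputable def pConv (X : BanachFunctionLattice Ω μ) (p : ℝ) : FunctionSpace Ω μ where
  carrier := {f | absRpow p f ∈ X.carrier}
  norm := fun f => (X.norm (absRpow p f)) ^ (1 / p)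

/-- The sum space `X₀ + X₁` (as a set). -/
def sumSet (A₀ A₁ : FunctionSpace Ω μ) : Set (Ω →ₘ[μ] ℝ) :=
  {f | ∃ a₀ ∈ A₀.carrier, ∃ a₁ ∈ A₁.carrier, f = a₀ + a₁}

/-- The Peetre `K`-functional `K(t, f; A₀, A₁)`. -/
noncomputable def Kfun (A₀ A₁ : FunctionSpace Ω μ) (t : ℝ) (f : Ω →ₘ[μ] ℝ) : ℝ :=
  sInf {r | ∃ a₀ ∈ A₀.carrier, ∃ a₁ ∈ A₁.carrier,
    f = a₀ + a₁ ∧ r = A₀.norm a₀ + t * A₁.norm a₁}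

/-- The norm of the sum space `X₀ + X₁`, namely `K(1, ·)`. -/
noncomputable def sumNorm (A₀ A₁ : FunctionSpace Ω μ) (f : Ω →ₘ[μ] ℝ) : ℝ :=
  Kfun A₀ A₁ 1 f

/-- The functional `D(t, f; A₀, A₁)`, the analogue of the `K`-functional restricted to
disjointly supported decompositions. -/
noncomputable def Dfun (A₀ A₁ : FunctionSpace Ω μ) (t : ℝ) (f : Ω →ₘ[μ] ℝ) : ℝ :=
  sInf {r | ∃ a₀ ∈ A₀.carrier, ∃ a₁ ∈ A₁.carrier,
    f = a₀ + a₁ ∧ a₀ * a₁ = 0 ∧ r = A₀.norm a₀ + t * A₁.norm a₁}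

/-- `T : (A₀, A₁) → (A₀, A₁)` is a bounded linear operator: `T` is linear on `A₀ + A₁`
and its restriction to each `Aⱼ` is a bounded operator from `Aⱼ` into itself. -/
def IsBoundedCoupleOperator (A₀ A₁ : FunctionSpace Ω μ) (T : (Ω →ₘ[μ] ℝ) → (Ω →ₘ[μ] ℝ)) :
    Prop :=
  (∀ f ∈ sumSet A₀ A₁, ∀ g ∈ sumSet A₀ A₁, T (f + g) = T f + T g) ∧
  (∀ (c : ℝ), ∀ f ∈ sumSet A₀ A₁, T (c • f) = c • T f) ∧
  (∀ f ∈ A₀.carrier, T f ∈ A₀.carrier) ∧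
  (∀ f ∈ A₁.carrier, T f ∈ A₁.carrier) ∧
  (∃ C₀ : ℝ, ∀ f ∈ A₀.carrier, A₀.norm (T f) ≤ C₀ * A₀.norm f) ∧
  (∃ C₁ : ℝ, ∀ f ∈ A₁.carrier, A₁.norm (T f) ≤ C₁ * A₁.norm f)

/-- `‖T‖_{Aⱼ → Aⱼ} ≤ C` for `j = 0, 1`. -/
def CoupleOperatorNormLE (A₀ A₁ : FunctionSpace Ω μ) (T : (Ω →ₘ[μ] ℝ) → (Ω →ₘ[μ] ℝ))
    (C : ℝ) : Prop :=
  (∀ f ∈ A₀.carrier, A₀.norm (T f) ≤ C * A₀.norm f) ∧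
  (∀ f ∈ A₁.carrier, A₁.norm (T f) ≤ C * A₁.norm f)

/-- `T` is a positive operator on `A₀ + A₁`. -/
def IsPositiveOn (A₀ A₁ : FunctionSpace Ω μ) (T : (Ω →ₘ[μ] ℝ) → (Ω →ₘ[μ] ℝ)) : Prop :=
  ∀ h ∈ sumSet A₀ A₁, 0 ≤ h → 0 ≤ T h

/-- `(A₀, A₁)` is a Calderón couple. -/
def IsCalderonCouple (A₀ A₁ : FunctionSpace Ω μ) : Prop :=
  ∀ f ∈ sumSet A₀ A₁, ∀ g ∈ sumSet A₀ A₁,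
    (∀ t > 0, Kfun A₀ A₁ t g ≤ Kfun A₀ A₁ t f) →
    ∃ T, IsBoundedCoupleOperator A₀ A₁ T ∧ T f = g

/-- `(A₀, A₁)` is a `C`-Calderón couple. -/
def IsCCalderonCouple (A₀ A₁ : FunctionSpace Ω μ) (C : ℝ) : Prop :=
  ∀ f ∈ sumSet A₀ A₁, ∀ g ∈ sumSet A₀ A₁,
    (∀ t > 0, Kfun A₀ A₁ t g ≤ Kfun A₀ A₁ t f) →
    ∃ T, IsBoundedCoupleOperator A₀ A₁ T ∧ T f = g ∧ CoupleOperatorNormLE A₀ A₁ T C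

/-- `(A₀, A₁)` is a positive Calderón couple. -/
def IsPositiveCalderonCouple (A₀ A₁ : FunctionSpace Ω μ) : Prop :=
  ∀ f ∈ sumSet A₀ A₁, ∀ g ∈ sumSet A₀ A₁, 0 ≤ f → 0 ≤ g →
    (∀ t > 0, Kfun A₀ A₁ t g ≤ Kfun A₀ A₁ t f) →
    ∃ T, IsBoundedCoupleOperator A₀ A₁ T ∧ IsPositiveOn A₀ A₁ T ∧ T f = g

/-- `(A₀, A₁)` is a positive `C`-Calderón couple. -/
def IsPositiveCCalderonCouple (A₀ A₁ : FunctionSpace Ω μ) (C : ℝ) : Prop :=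
  ∀ f ∈ sumSet A₀ A₁, ∀ g ∈ sumSet A₀ A₁, 0 ≤ f → 0 ≤ g →
    (∀ t > 0, Kfun A₀ A₁ t g ≤ Kfun A₀ A₁ t f) →
    ∃ T, IsBoundedCoupleOperator A₀ A₁ T ∧ IsPositiveOn A₀ A₁ T ∧ T f = g ∧
      CoupleOperatorNormLE A₀ A₁ T C

/-- A set `S` of (classes of) measurable functions has the Least Upper Bound Property:
every nonempty subset of `S` bounded above by an element of `S` has a least upper bound
in `S` (for the a.e. pointwise order). -/
def HasLUBP (S : Set (Ω →ₘ[μ] ℝ)) : Prop :=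
  ∀ A ⊆ S, A.Nonempty → (∃ b ∈ S, ∀ a ∈ A, a ≤ b) →
    ∃ y ∈ S, (∀ a ∈ A, a ≤ y) ∧ ∀ z ∈ S, (∀ a ∈ A, a ≤ z) → y ≤ z


/-! ### Auxiliary scalar lemmas for Maligranda's inequality -/

private lemma mal_conv2 {w₁ w₂ z₁ z₂ p : ℝ} (hw₁ : 0 ≤ w₁) (hw₂ : 0 ≤ w₂) (hw : w₁ + w₂ = 1)
    (hz₁ : 0 ≤ z₁) (hz₂ : 0 ≤ z₂) (hp : 1 ≤ p) :
    (w₁ * z₁ + w₂ * z₂) ^ p ≤ w₁ * z₁ ^ p + w₂ * z₂ ^ p := by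
  have h := NNReal.rpow_arith_mean_le_arith_mean2_rpow ⟨w₁, hw₁⟩ ⟨w₂, hw₂⟩ ⟨z₁, hz₁⟩ ⟨z₂, hz₂⟩
    (by apply NNReal.eq; exact hw) hp
  rw [← NNReal.coe_le_coe] at h
  push_cast [NNReal.coe_rpow] at h
  exact h

private lemma mal_subadd_rpow {x y p : ℝ} (hx : 0 ≤ x) (hy : 0 ≤ y) (hp : 0 ≤ p) (hp1 : p ≤ 1) :
    (x + y) ^ p ≤ x ^ p + y ^ p := by
  have h := NNReal.rpow_add_le_add_rpow ⟨x, hx⟩ ⟨y, hy⟩ hp hp1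
  rw [← NNReal.coe_le_coe] at h
  push_cast [NNReal.coe_rpow] at h
  exact h

private lemma mal_rpow_rpow_inv {x p : ℝ} (hx : 0 ≤ x) (hp : p ≠ 0) : (x ^ p) ^ (1/p) = x := by
  rw [← Real.rpow_mul hx, mul_one_div, div_self hp, Real.rpow_one]

private lemma mal_rpow_inv_rpow {x p : ℝ} (hx : 0 ≤ x) (hp : p ≠ 0) : (x ^ (1/p)) ^ p = x := by
  rw [← Real.rpow_mul hx, one_div, inv_mul_cancel₀ hp, Real.rpow_one]

private lemma mal_lam_ineq {u v l p : ℝ} (hu : 0 ≤ u) (hv : 0 ≤ v) (hl : 0 < l) (hl1 : l < 1)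
    (hp : 1 < p) : (u + v) ^ p ≤ l ^ (1-p) * u ^ p + (1-l) ^ (1-p) * v ^ p := by
  have hl' : 0 < 1 - l := by linarith
  have h := mal_conv2 (w₁ := l) (w₂ := 1 - l) (z₁ := u / l) (z₂ := v / (1 - l)) hl.le hl'.le
    (by ring) (div_nonneg hu hl.le) (div_nonneg hv hl'.le) hp.le
  rw [mul_div_cancel₀ _ hl.ne', mul_div_cancel₀ _ hl'.ne'] at h
  calc (u+v)^p ≤ l * (u / l) ^ p + (1-l) * (v / (1-l)) ^ p := h
    _ = l ^ (1-p) * u ^ p + (1-l) ^ (1-p) * v ^ p := by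
        rw [Real.div_rpow hu hl.le, Real.div_rpow hv hl'.le,
          Real.rpow_sub hl, Real.rpow_sub hl', Real.rpow_one]
        field_simp
        simp only [Real.rpow_one, pow_one]
        ring

private lemma mal_opt_eq {A B p : ℝ} (hA : 0 < A) (hB : 0 < B) (hp : 1 < p) :
    (A^(1/p)/(A^(1/p)+B^(1/p))) ^ (1-p) * A
      + (1 - A^(1/p)/(A^(1/p)+B^(1/p))) ^ (1-p) * B = (A^(1/p)+B^(1/p)) ^ p := by
  have hp0 : p ≠ 0 := by positivity
  set a := A^(1/p) with ha'
  set b := B^(1/p) with hb'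
  have ha : 0 < a := Real.rpow_pos_of_pos hA _
  have hb : 0 < b := Real.rpow_pos_of_pos hB _
  have hs : 0 < a + b := by linarith
  have h1 : 1 - a/(a+b) = b/(a+b) := by field_simp; ring
  have hA' : A = a ^ p := (mal_rpow_inv_rpow hA.le hp0).symm
  have hB' : B = b ^ p := (mal_rpow_inv_rpow hB.le hp0).symm
  rw [h1, Real.div_rpow ha.le hs.le, Real.div_rpow hb.le hs.le, hA', hB',
    Real.rpow_sub ha, Real.rpow_sub hb, Real.rpow_sub hs, Real.rpow_one, Real.rpow_one,
    Real.rpow_one]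
  have hap : (0:ℝ) < a ^ p := Real.rpow_pos_of_pos ha _
  have hbp : (0:ℝ) < b ^ p := Real.rpow_pos_of_pos hb _
  have hsp : (0:ℝ) < (a+b) ^ p := Real.rpow_pos_of_pos hs _
  field_simp

private lemma mal_two_ineq {x y p : ℝ} (hx : 0 ≤ x) (hy : 0 ≤ y) (hp : 1 < p) :
    (x ^ (1/p) + y ^ (1/p)) ^ p ≤ 2 ^ (p-1) * (x + y) := by
  have hp0 : p ≠ 0 := by positivity
  have h := mal_conv2 (w₁ := (1:ℝ)/2) (w₂ := (1:ℝ)/2) (z₁ := x^(1/p)) (z₂ := y^(1/p))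
    (by norm_num) (by norm_num) (by norm_num) (Real.rpow_nonneg hx _) (Real.rpow_nonneg hy _)
    hp.le
  rw [mal_rpow_inv_rpow hx hp0, mal_rpow_inv_rpow hy hp0] at h
  have h2 : (1/2 * x^(1/p) + 1/2 * y^(1/p)) = (x^(1/p)+y^(1/p))/2 := by ring
  rw [h2, Real.div_rpow (by positivity) (by norm_num)] at h
  have h3 : (0:ℝ) < 2 ^ p := Real.rpow_pos_of_pos (by norm_num) _
  rw [div_le_iff₀ h3] at h
  calc (x ^ (1/p) + y ^ (1/p)) ^ p ≤ (1/2*x + 1/2*y) * 2^p := h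
    _ = 2 ^ (p-1) * (x+y) := by
        rw [Real.rpow_sub (by norm_num), Real.rpow_one]; ring

private lemma mal_measurable_sign : Measurable Real.sign := by
  have h : Real.sign = fun r : ℝ => if r < 0 then (-1:ℝ) else if 0 < r then 1 else 0 := rfl
  rw [h]
  exact Measurable.ite (measurableSet_lt measurable_id measurable_const) measurable_const
    (Measurable.ite (measurableSet_lt measurable_const measurable_id) measurable_const
      measurable_const)

/-- The scalar core of both decompositions in Maligranda's inequality. -/
private lemma mal_pointwise {p F B₀ B₁ : ℝ} (hp : 1 < p) (h : |F| ^ p = B₀ + B₁) :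
    abs (|Real.sign F * (min (|F| ^ p) (max B₀ 0)) ^ (1/p)| ^ p) ≤ |B₀| ∧
    abs (|F - Real.sign F * (min (|F| ^ p) (max B₀ 0)) ^ (1/p)| ^ p) ≤ |B₁| := by
  have hp0 : p ≠ 0 := by positivity
  have hip : (0:ℝ) < 1/p := by positivity
  set u := |F| ^ p with hu'
  have hu : 0 ≤ u := Real.rpow_nonneg (abs_nonneg F) p
  set m := min u (max B₀ 0) with hm
  have hm0 : 0 ≤ m := le_min hu (le_max_right _ _)
  have hmu : m ≤ u := min_le_left _ _
  have hmb : m ≤ |B₀| := le_trans (min_le_right _ _) (max_le (le_abs_self _) (abs_nonneg _))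
  set s := m ^ (1/p) with hs
  have hs0 : 0 ≤ s := Real.rpow_nonneg hm0 _
  have hsf : s ≤ |F| := by
    have h1 : m ^ (1/p) ≤ u ^ (1/p) := Real.rpow_le_rpow hm0 hmu hip.le
    rwa [hu', mal_rpow_rpow_inv (abs_nonneg F) hp0] at h1
  have hsp : s ^ p = m := mal_rpow_inv_rpow hm0 hp0
  have habs0 : |Real.sign F * s| = s := by
    rcases lt_trichotomy F 0 with h0 | h0 | h0
    · rw [Real.sign_of_neg h0]; rw [abs_mul]; simp [abs_of_nonneg hs0]
    · have hu0 : u = 0 := by rw [hu', h0]; simp [Real.zero_rpow hp0]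
      have : s = 0 := by
        have : m = 0 := le_antisymm (hmu.trans hu0.le) hm0
        rw [hs, this, Real.zero_rpow (by positivity : (1:ℝ)/p ≠ 0)]
      simp [h0, this]
    · rw [Real.sign_of_pos h0]; rw [abs_mul]; simp [abs_of_nonneg hs0]
  constructor
  · rw [habs0, hsp, abs_of_nonneg hm0]; exact hmb
  · have hFs : F - Real.sign F * s = Real.sign F * (|F| - s) := by
      rcases lt_trichotomy F 0 with h0 | h0 | h0
      · rw [Real.sign_of_neg h0, abs_of_neg h0]; ring
      · subst h0; simp
      · rw [Real.sign_of_pos h0, abs_of_pos h0]; ring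
    have habs1 : |F - Real.sign F * s| = |F| - s := by
      rw [hFs, abs_mul, abs_of_nonneg (sub_nonneg.2 hsf)]
      rcases lt_trichotomy F 0 with h0 | h0 | h0
      · rw [Real.sign_of_neg h0]; norm_num
      · have : s = 0 := le_antisymm (by simpa [h0] using hsf) hs0
        simp [h0, this]
      · rw [Real.sign_of_pos h0]; norm_num
    rw [habs1]
    have hum : 0 ≤ u - m := by linarith
    have h2 : (|F| - s) ^ p ≤ u - m := by
      have hsub : u ^ (1/p) ≤ m ^ (1/p) + (u - m) ^ (1/p) := by
        have h3 := mal_subadd_rpow hm0 hum hip.le (by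
          rw [div_le_one (by positivity)]; linarith)
        have h4 : m + (u - m) = u := by ring
        rwa [h4] at h3
      rw [hu', mal_rpow_rpow_inv (abs_nonneg F) hp0] at hsub
      have h3 : |F| - s ≤ (u - m)^(1/p) := by rw [hs]; linarith
      calc (|F| - s)^p ≤ ((u-m)^(1/p))^p :=
            Real.rpow_le_rpow (sub_nonneg.2 hsf) h3 (by positivity)
        _ = u - m := mal_rpow_inv_rpow hum hp0
    have h4 : u - m ≤ |B₁| := by
      rcases le_total (max B₀ 0) u with hc | hc
      · rw [hm, min_eq_right hc]
        have h5 : B₀ ≤ max B₀ 0 := le_max_left _ _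
        have h6 : u - B₀ = B₁ := by rw [hu'] at h ⊢; linarith
        have : u - max B₀ 0 ≤ B₁ := by linarith
        exact this.trans (le_abs_self _)
      · rw [hm, min_eq_left hc]; simpa using abs_nonneg B₁
    calc |(|F| - s)^p| = (|F| - s)^p := abs_of_nonneg (Real.rpow_nonneg (sub_nonneg.2 hsf) _)
      _ ≤ u - m := h2
      _ ≤ |B₁| := h4


private lemma mal_absRpow_coeFn (p : ℝ) (f : Ω →ₘ[μ] ℝ) :
    (absRpow p f : Ω → ℝ) =ᵐ[μ] fun ω => |f ω| ^ p := AEEqFun.coeFn_mk _ _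

private lemma mal_abs_le_abs {g h : Ω →ₘ[μ] ℝ} (H : ∀ᵐ ω ∂μ, |g ω| ≤ |h ω|) : |g| ≤ |h| := by
  rw [← MeasureTheory.AEEqFun.coeFn_le]
  filter_upwards [MeasureTheory.AEEqFun.coeFn_abs g, MeasureTheory.AEEqFun.coeFn_abs h, H]
    with ω h1 h2 h3
  rw [h1, h2]; exact h3

private lemma mal_norm_zero (X : BanachFunctionLattice Ω μ) : X.norm 0 = 0 := by
  have h := X.norm_smul 0 0 X.zero_mem
  simpa using h

private lemma mal_meas_absRpow (p : ℝ) (f : Ω →ₘ[μ] ℝ) :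
    AEMeasurable (fun ω => |f ω| ^ p) μ :=
  ((by measurability : Measurable fun x : ℝ => |x| ^ p).comp_aemeasurable f.aemeasurable)

private lemma mal_lower_decomp (X₀ X₁ : BanachFunctionLattice Ω μ) {p : ℝ} (hp : 1 < p)
    {f a₀ a₁ : Ω →ₘ[μ] ℝ} (hsum : f = a₀ + a₁)
    (h₀ : absRpow p a₀ ∈ X₀.carrier) (h₁ : absRpow p a₁ ∈ X₁.carrier)
    {l : ℝ} (hl : 0 < l) (hl1 : l < 1) :
    ∃ b₀ ∈ X₀.carrier, ∃ b₁ ∈ X₁.carrier, absRpow p f = b₀ + b₁ ∧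
      X₀.norm b₀ ≤ l ^ (1-p) * X₀.norm (absRpow p a₀) ∧
      X₁.norm b₁ ≤ (1-l) ^ (1-p) * X₁.norm (absRpow p a₁) := by
  have hp0 : (0:ℝ) < p := by linarith
  have hC : 0 < l ^ (1-p) := Real.rpow_pos_of_pos hl _
  have hC' : 0 < (1-l) ^ (1-p) := Real.rpow_pos_of_pos (by linarith) _
  have hmf := mal_meas_absRpow p f
  have hm0 := mal_meas_absRpow p a₀
  set g₀ : Ω → ℝ := fun ω => min (|f ω| ^ p) (l ^ (1-p) * |a₀ ω| ^ p) with hg₀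
  have hmg₀ : AEMeasurable g₀ μ := hmf.min (hm0.const_mul _)
  set b₀ : Ω →ₘ[μ] ℝ := AEEqFun.mk g₀ hmg₀.aestronglyMeasurable with hb₀'
  set b₁ : Ω →ₘ[μ] ℝ := AEEqFun.mk (fun ω => |f ω| ^ p - g₀ ω)
    (hmf.sub hmg₀).aestronglyMeasurable with hb₁'
  have hfa : ⇑f =ᵐ[μ] fun ω => a₀ ω + a₁ ω := by
    have h := MeasureTheory.AEEqFun.coeFn_add a₀ a₁
    rw [← hsum] at h
    filter_upwards [h] with ω hω using hω
  have hkey : ∀ᵐ ω ∂μ, |f ω| ^ p ≤ l ^ (1-p) * |a₀ ω| ^ p + (1-l) ^ (1-p) * |a₁ ω| ^ p := by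
    filter_upwards [hfa] with ω hω
    calc |f ω| ^ p ≤ (|a₀ ω| + |a₁ ω|) ^ p := by
          apply Real.rpow_le_rpow (abs_nonneg _) _ hp0.le
          rw [hω]; exact abs_add_le _ _
      _ ≤ _ := mal_lam_ineq (abs_nonneg _) (abs_nonneg _) hl hl1 hp
  have hone : ∀ᵐ ω ∂μ, |b₀ ω| ≤ |(l ^ (1-p) • absRpow p a₀) ω| := by
    filter_upwards [MeasureTheory.AEEqFun.coeFn_mk g₀ hmg₀.aestronglyMeasurable,
      MeasureTheory.AEEqFun.coeFn_smul (l ^ (1-p)) (absRpow p a₀), mal_absRpow_coeFn p a₀]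
      with ω e1 e2 e3
    rw [e1, e2]
    simp only [Pi.smul_apply, smul_eq_mul, e3]
    have h1 : 0 ≤ g₀ ω := le_min (Real.rpow_nonneg (abs_nonneg _) _)
      (by positivity)
    rw [abs_of_nonneg h1]
    exact le_trans (min_le_right _ _) (le_abs_self _)
  have htwo : ∀ᵐ ω ∂μ, |b₁ ω| ≤ |((1-l) ^ (1-p) • absRpow p a₁) ω| := by
    filter_upwards [MeasureTheory.AEEqFun.coeFn_mk (fun ω => |f ω| ^ p - g₀ ω)
        (hmf.sub hmg₀).aestronglyMeasurable,
      MeasureTheory.AEEqFun.coeFn_smul ((1-l) ^ (1-p)) (absRpow p a₁), mal_absRpow_coeFn p a₁,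
      hkey] with ω e1 e2 e3 e4
    rw [e1, e2]
    simp only [Pi.smul_apply, smul_eq_mul, e3]
    have hw : (0:ℝ) ≤ (1-l) ^ (1-p) * |a₁ ω| ^ p := by positivity
    have h1 : 0 ≤ |f ω| ^ p - g₀ ω := sub_nonneg.2 (min_le_left _ _)
    rw [abs_of_nonneg h1]
    have h2 : |f ω| ^ p - g₀ ω ≤ (1-l) ^ (1-p) * |a₁ ω| ^ p := by
      rcases le_total (l ^ (1-p) * |a₀ ω| ^ p) (|f ω| ^ p) with hc | hc
      · rw [hg₀]; simp only [min_eq_right hc]; linarith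
      · rw [hg₀]; simp only [min_eq_left hc]; simpa using hw
    exact h2.trans (le_abs_self _)
  have hmem₀ : b₀ ∈ X₀.carrier :=
    X₀.ideal_mem _ (X₀.smul_mem (l ^ (1-p)) h₀) b₀ (mal_abs_le_abs hone)
  have hmem₁ : b₁ ∈ X₁.carrier :=
    X₁.ideal_mem _ (X₁.smul_mem ((1-l) ^ (1-p)) h₁) b₁ (mal_abs_le_abs htwo)
  refine ⟨b₀, hmem₀, b₁, hmem₁, ?_, ?_, ?_⟩
  · apply MeasureTheory.AEEqFun.ext
    filter_upwards [mal_absRpow_coeFn p f, MeasureTheory.AEEqFun.coeFn_add b₀ b₁,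
      MeasureTheory.AEEqFun.coeFn_mk g₀ hmg₀.aestronglyMeasurable,
      MeasureTheory.AEEqFun.coeFn_mk (fun ω => |f ω| ^ p - g₀ ω)
        (hmf.sub hmg₀).aestronglyMeasurable] with ω e1 e2 e3 e4
    rw [e1, e2]
    simp only [hb₀', hb₁', Pi.add_apply, e3, e4]
    ring
  · calc X₀.norm b₀ ≤ X₀.norm (l ^ (1-p) • absRpow p a₀) :=
          X₀.ideal_norm_le _ (X₀.smul_mem _ h₀) b₀ (mal_abs_le_abs hone)
      _ = l ^ (1-p) * X₀.norm (absRpow p a₀) := by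
          rw [X₀.norm_smul _ _ h₀, abs_of_pos hC]
  · calc X₁.norm b₁ ≤ X₁.norm ((1-l) ^ (1-p) • absRpow p a₁) :=
          X₁.ideal_norm_le _ (X₁.smul_mem _ h₁) b₁ (mal_abs_le_abs htwo)
      _ = (1-l) ^ (1-p) * X₁.norm (absRpow p a₁) := by
          rw [X₁.norm_smul _ _ h₁, abs_of_pos hC']


private lemma mal_upper_decomp (X₀ X₁ : BanachFunctionLattice Ω μ) {p : ℝ} (hp : 1 < p)
    {f b₀ b₁ : Ω →ₘ[μ] ℝ} (hsum : absRpow p f = b₀ + b₁)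
    (h₀ : b₀ ∈ X₀.carrier) (h₁ : b₁ ∈ X₁.carrier) :
    ∃ a₀ a₁ : Ω →ₘ[μ] ℝ, f = a₀ + a₁ ∧
      absRpow p a₀ ∈ X₀.carrier ∧ absRpow p a₁ ∈ X₁.carrier ∧
      X₀.norm (absRpow p a₀) ≤ X₀.norm b₀ ∧ X₁.norm (absRpow p a₁) ≤ X₁.norm b₁ := by
  have hp0 : (0:ℝ) < p := by linarith
  set g : Ω → ℝ := fun ω => Real.sign (f ω) * (min (|f ω| ^ p) (max (b₀ ω) 0)) ^ (1/p)
    with hg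
  have hmg : AEMeasurable g μ := by
    apply AEMeasurable.mul
    · exact mal_measurable_sign.comp_aemeasurable f.aemeasurable
    · exact (by measurability : Measurable fun x : ℝ => x ^ (1/p)).comp_aemeasurable
        ((mal_meas_absRpow p f).min (b₀.aemeasurable.max aemeasurable_const))
  set a₀ : Ω →ₘ[μ] ℝ := AEEqFun.mk g hmg.aestronglyMeasurable with ha₀'
  set a₁ : Ω →ₘ[μ] ℝ := f - a₀ with ha₁'
  -- base a.e. facts
  have hae : ∀ᵐ ω ∂μ, |f ω| ^ p = b₀ ω + b₁ ω := by
    have h := mal_absRpow_coeFn p f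
    rw [hsum] at h
    filter_upwards [h, MeasureTheory.AEEqFun.coeFn_add b₀ b₁] with ω e1 e2
    rw [← e1, e2]; rfl
  have hca₀ : ⇑a₀ =ᵐ[μ] g := MeasureTheory.AEEqFun.coeFn_mk g hmg.aestronglyMeasurable
  have hca₁ : ⇑a₁ =ᵐ[μ] fun ω => f ω - a₀ ω := by
    rw [ha₁']
    filter_upwards [MeasureTheory.AEEqFun.coeFn_sub f a₀] with ω e using e
  have hclaimA : ∀ᵐ ω ∂μ, |(absRpow p a₀) ω| ≤ |b₀ ω| := by
    filter_upwards [mal_absRpow_coeFn p a₀, hca₀, hae] with ω e1 e2 e3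
    rw [e1, e2, hg]
    exact (mal_pointwise hp e3).1
  have hclaimB : ∀ᵐ ω ∂μ, |(absRpow p a₁) ω| ≤ |b₁ ω| := by
    filter_upwards [mal_absRpow_coeFn p a₁, hca₁, hca₀, hae] with ω e1 e2 e3 e4
    rw [e1, e2, e3, hg]
    exact (mal_pointwise hp e4).2
  have hA : |absRpow p a₀| ≤ |b₀| := mal_abs_le_abs hclaimA
  have hB : |absRpow p a₁| ≤ |b₁| := mal_abs_le_abs hclaimB
  exact ⟨a₀, a₁, by rw [ha₁']; abel, X₀.ideal_mem _ h₀ _ hA, X₁.ideal_mem _ h₁ _ hB,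
    X₀.ideal_norm_le _ h₀ _ hA, X₁.ideal_norm_le _ h₁ _ hB⟩

/-- **Maligranda's inequality.** For `1 < p < ∞`, `f ∈ X₀^(p) + X₁^(p)` and
`t > 0`,
`K(t, |f|^p; X₀, X₁)^(1/p) ≤ K(t^(1/p), f; X₀^(p), X₁^(p)) ≤ 2^(1-1/p) K(t, |f|^p; X₀, X₁)^(1/p)`. -/
theorem Kfun_pConv_equiv
    (X₀ X₁ : BanachFunctionLattice Ω μ) (p : ℝ) (hp : 1 < p)
    (f : Ω →ₘ[μ] ℝ) (hf : f ∈ sumSet (pConv X₀ p) (pConv X₁ p))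
    (t : ℝ) (ht : 0 < t) :
    (Kfun X₀.toFunctionSpace X₁.toFunctionSpace t (absRpow p f)) ^ (1 / p)
        ≤ Kfun (pConv X₀ p) (pConv X₁ p) (t ^ (1 / p)) f ∧
      Kfun (pConv X₀ p) (pConv X₁ p) (t ^ (1 / p)) f
        ≤ 2 ^ (1 - 1 / p) *
          (Kfun X₀.toFunctionSpace X₁.toFunctionSpace t (absRpow p f)) ^ (1 / p) := by
  have hp0 : (0:ℝ) < p := by linarith
  have hpne : p ≠ 0 := hp0.ne'
  have hip : (0:ℝ) < 1/p := by positivity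
  obtain ⟨a₀, ha₀, a₁, ha₁, hfa⟩ := hf
  set SK : Set ℝ := {r | ∃ b₀ ∈ X₀.toFunctionSpace.carrier, ∃ b₁ ∈ X₁.toFunctionSpace.carrier,
    absRpow p f = b₀ + b₁ ∧
    r = X₀.toFunctionSpace.norm b₀ + t * X₁.toFunctionSpace.norm b₁} with hSK
  set SP : Set ℝ := {r | ∃ c₀ ∈ (pConv X₀ p).carrier, ∃ c₁ ∈ (pConv X₁ p).carrier,
    f = c₀ + c₁ ∧ r = (pConv X₀ p).norm c₀ + t ^ (1/p) * (pConv X₁ p).norm c₁} with hSP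
  have hKdef : Kfun X₀.toFunctionSpace X₁.toFunctionSpace t (absRpow p f) = sInf SK := rfl
  have hPdef : Kfun (pConv X₀ p) (pConv X₁ p) (t ^ (1/p)) f = sInf SP := rfl
  have hSKnn : ∀ r ∈ SK, 0 ≤ r := by
    rintro r ⟨b₀, hb₀, b₁, hb₁, -, rfl⟩
    have h1 := X₀.norm_nonneg b₀ hb₀
    have h2 := X₁.norm_nonneg b₁ hb₁
    have : (0:ℝ) ≤ t * X₁.norm b₁ := mul_nonneg ht.le h2
    exact add_nonneg h1 this
  have hSPnn : ∀ r ∈ SP, 0 ≤ r := by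
    rintro r ⟨c₀, hc₀, c₁, hc₁, -, rfl⟩
    have h1 : (0:ℝ) ≤ (X₀.norm (absRpow p c₀)) ^ (1/p) :=
      Real.rpow_nonneg (X₀.norm_nonneg _ hc₀) _
    have h2 : (0:ℝ) ≤ (X₁.norm (absRpow p c₁)) ^ (1/p) :=
      Real.rpow_nonneg (X₁.norm_nonneg _ hc₁) _
    exact add_nonneg h1 (mul_nonneg (Real.rpow_nonneg ht.le _) h2)
  have hbddK : BddBelow SK := ⟨0, fun r hr => hSKnn r hr⟩
  have hbddP : BddBelow SP := ⟨0, fun r hr => hSPnn r hr⟩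
  have hKnn : 0 ≤ sInf SK := Real.sInf_nonneg hSKnn
  have hKpnn : 0 ≤ sInf SP := Real.sInf_nonneg hSPnn
  have hSPne : SP.Nonempty := ⟨_, ⟨a₀, ha₀, a₁, ha₁, hfa, rfl⟩⟩
  have hSKne : SK.Nonempty := by
    obtain ⟨b₀, hb₀, b₁, hb₁, hbsum, -, -⟩ :=
      mal_lower_decomp X₀ X₁ hp hfa ha₀ ha₁ (l := 1/2) (by norm_num) (by norm_num)
    exact ⟨_, ⟨b₀, hb₀, b₁, hb₁, hbsum, rfl⟩⟩
  constructor
  · -- lower estimate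
    rw [hPdef, hKdef]
    apply le_csInf hSPne
    rintro r ⟨c₀, hc₀, c₁, hc₁, hsum, rfl⟩
    set N₀ := X₀.norm (absRpow p c₀) with hN₀
    set N₁ := X₁.norm (absRpow p c₁) with hN₁
    have hN₀nn : 0 ≤ N₀ := X₀.norm_nonneg _ hc₀
    have hN₁nn : 0 ≤ N₁ := X₁.norm_nonneg _ hc₁
    have hrform : (pConv X₀ p).norm c₀ + t ^ (1/p) * (pConv X₁ p).norm c₁
        = N₀ ^ (1/p) + t ^ (1/p) * N₁ ^ (1/p) := rfl
    rw [hrform]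
    have hrnn : 0 ≤ N₀ ^ (1/p) + t ^ (1/p) * N₁ ^ (1/p) := by positivity
    suffices hsuf : sInf SK ≤ (N₀ ^ (1/p) + t ^ (1/p) * N₁ ^ (1/p)) ^ p by
      have h1 := Real.rpow_le_rpow hKnn hsuf hip.le
      rwa [mal_rpow_rpow_inv hrnn hpne] at h1
    rcases eq_or_lt_of_le hN₀nn with h0 | h0
    · -- N₀ = 0 : c₀ vanishes a.e.
      have hz : absRpow p c₀ = 0 := (X₀.norm_eq_zero_iff _ hc₀).1 h0.symm
      have hfle : ∀ᵐ ω ∂μ, |(absRpow p f) ω| ≤ |(absRpow p c₁) ω| := by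
        have h1 := mal_absRpow_coeFn p c₀
        rw [hz] at h1
        have h2 : ⇑f =ᵐ[μ] fun ω => c₀ ω + c₁ ω := by
          have h := MeasureTheory.AEEqFun.coeFn_add c₀ c₁
          rw [← hsum] at h
          filter_upwards [h] with ω hω using hω
        filter_upwards [h1.symm, MeasureTheory.AEEqFun.coeFn_zero (β := ℝ), h2,
          mal_absRpow_coeFn p f, mal_absRpow_coeFn p c₁] with ω e1 e2 e3 e4 e5
        rw [e2] at e1
        have hc0 : c₀ ω = 0 := by
          have h3 : |c₀ ω| ^ p = 0 := e1
          have h4 := (Real.rpow_eq_zero_iff_of_nonneg (abs_nonneg (c₀ ω))).1 h3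
          exact abs_eq_zero.1 h4.1
        rw [e4, e5]
        have : |f ω| = |c₁ ω| := by rw [e3, hc0, zero_add]
        rw [this]
      have hmem : absRpow p f ∈ X₁.carrier := X₁.ideal_mem _ hc₁ _ (mal_abs_le_abs hfle)
      have hle : X₁.norm (absRpow p f) ≤ N₁ := X₁.ideal_norm_le _ hc₁ _ (mal_abs_le_abs hfle)
      have hK_le : sInf SK ≤ X₀.norm 0 + t * X₁.norm (absRpow p f) :=
        csInf_le hbddK ⟨0, X₀.zero_mem, absRpow p f, hmem, (zero_add _).symm, rfl⟩
      rw [mal_norm_zero X₀, zero_add] at hK_le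
      have hrp : (N₀ ^ (1/p) + t ^ (1/p) * N₁ ^ (1/p)) ^ p = t * N₁ := by
        rw [← h0, Real.zero_rpow (by positivity : (1:ℝ)/p ≠ 0), zero_add,
          ← Real.mul_rpow ht.le hN₁nn, mal_rpow_inv_rpow (mul_nonneg ht.le hN₁nn) hpne]
      rw [hrp]
      calc sInf SK ≤ t * X₁.norm (absRpow p f) := hK_le
        _ ≤ t * N₁ := mul_le_mul_of_nonneg_left hle ht.le
    rcases eq_or_lt_of_le hN₁nn with h1 | h1
    · -- N₁ = 0 : c₁ vanishes a.e.
      have hz : absRpow p c₁ = 0 := (X₁.norm_eq_zero_iff _ hc₁).1 h1.symm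
      have hfle : ∀ᵐ ω ∂μ, |(absRpow p f) ω| ≤ |(absRpow p c₀) ω| := by
        have ha := mal_absRpow_coeFn p c₁
        rw [hz] at ha
        have h2 : ⇑f =ᵐ[μ] fun ω => c₀ ω + c₁ ω := by
          have h := MeasureTheory.AEEqFun.coeFn_add c₀ c₁
          rw [← hsum] at h
          filter_upwards [h] with ω hω using hω
        filter_upwards [ha.symm, MeasureTheory.AEEqFun.coeFn_zero (β := ℝ), h2,
          mal_absRpow_coeFn p f, mal_absRpow_coeFn p c₀] with ω e1 e2 e3 e4 e5
        rw [e2] at e1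
        have hc1 : c₁ ω = 0 := by
          have h3 : |c₁ ω| ^ p = 0 := e1
          have h4 := (Real.rpow_eq_zero_iff_of_nonneg (abs_nonneg (c₁ ω))).1 h3
          exact abs_eq_zero.1 h4.1
        rw [e4, e5]
        have : |f ω| = |c₀ ω| := by rw [e3, hc1, add_zero]
        rw [this]
      have hmem : absRpow p f ∈ X₀.carrier := X₀.ideal_mem _ hc₀ _ (mal_abs_le_abs hfle)
      have hle : X₀.norm (absRpow p f) ≤ N₀ := X₀.ideal_norm_le _ hc₀ _ (mal_abs_le_abs hfle)
      have hK_le : sInf SK ≤ X₀.norm (absRpow p f) + t * X₁.norm 0 :=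
        csInf_le hbddK ⟨absRpow p f, hmem, 0, X₁.zero_mem, (add_zero _).symm, rfl⟩
      rw [mal_norm_zero X₁, mul_zero, add_zero] at hK_le
      have hrp : (N₀ ^ (1/p) + t ^ (1/p) * N₁ ^ (1/p)) ^ p = N₀ := by
        rw [← h1, Real.zero_rpow (by positivity : (1:ℝ)/p ≠ 0), mul_zero, add_zero,
          mal_rpow_inv_rpow hN₀nn hpne]
      rw [hrp]
      exact hK_le.trans hle
    · -- main case : both norms positive
      have htN₁ : 0 < t * N₁ := mul_pos ht h1
      set lam := N₀ ^ (1/p) / (N₀ ^ (1/p) + (t * N₁) ^ (1/p)) with hlam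
      have hden : 0 < N₀ ^ (1/p) + (t * N₁) ^ (1/p) := by
        have := Real.rpow_pos_of_pos h0 (1/p)
        have := Real.rpow_pos_of_pos htN₁ (1/p)
        linarith
      have hlam0 : 0 < lam := div_pos (Real.rpow_pos_of_pos h0 _) hden
      have hlam1 : lam < 1 := by
        rw [hlam, div_lt_one hden]
        have := Real.rpow_pos_of_pos htN₁ (1/p)
        linarith
      obtain ⟨b₀, hb₀, b₁, hb₁, hbsum, hn₀, hn₁⟩ :=
        mal_lower_decomp X₀ X₁ hp hsum hc₀ hc₁ hlam0 hlam1
      have hK_le : sInf SK ≤ X₀.norm b₀ + t * X₁.norm b₁ :=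
        csInf_le hbddK ⟨b₀, hb₀, b₁, hb₁, hbsum, rfl⟩
      have heq := mal_opt_eq h0 htN₁ hp
      rw [← hlam] at heq
      have hmul : (t * N₁) ^ (1/p) = t ^ (1/p) * N₁ ^ (1/p) := Real.mul_rpow ht.le hN₁nn
      calc sInf SK ≤ X₀.norm b₀ + t * X₁.norm b₁ := hK_le
        _ ≤ lam ^ (1-p) * N₀ + t * ((1-lam) ^ (1-p) * N₁) :=
            add_le_add hn₀ (mul_le_mul_of_nonneg_left hn₁ ht.le)
        _ = lam ^ (1-p) * N₀ + (1-lam) ^ (1-p) * (t * N₁) := by ring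
        _ = (N₀ ^ (1/p) + (t * N₁) ^ (1/p)) ^ p := heq
        _ = (N₀ ^ (1/p) + t ^ (1/p) * N₁ ^ (1/p)) ^ p := by rw [hmul]
  · -- upper estimate
    rw [hPdef, hKdef]
    have step : ∀ r ∈ SK, sInf SP ^ p ≤ 2 ^ (p-1) * r := by
      rintro r ⟨b₀, hb₀, b₁, hb₁, hbsum, rfl⟩
      obtain ⟨c₀, c₁, hcsum, hm₀, hm₁, hn₀, hn₁⟩ := mal_upper_decomp X₀ X₁ hp hbsum hb₀ hb₁
      have hR₀ : 0 ≤ X₀.norm b₀ := X₀.norm_nonneg _ hb₀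
      have hR₁ : 0 ≤ X₁.norm b₁ := X₁.norm_nonneg _ hb₁
      have h1 : sInf SP ≤ (X₀.norm (absRpow p c₀)) ^ (1/p)
          + t ^ (1/p) * (X₁.norm (absRpow p c₁)) ^ (1/p) :=
        csInf_le hbddP ⟨c₀, hm₀, c₁, hm₁, hcsum, rfl⟩
      have h2 : (X₀.norm (absRpow p c₀)) ^ (1/p) + t ^ (1/p) * (X₁.norm (absRpow p c₁)) ^ (1/p)
          ≤ (X₀.norm b₀) ^ (1/p) + (t * X₁.norm b₁) ^ (1/p) := by
        rw [Real.mul_rpow ht.le hR₁]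
        exact add_le_add
          (Real.rpow_le_rpow (X₀.norm_nonneg _ hm₀) hn₀ hip.le)
          (mul_le_mul_of_nonneg_left
            (Real.rpow_le_rpow (X₁.norm_nonneg _ hm₁) hn₁ hip.le)
            (Real.rpow_nonneg ht.le _))
      have h3 : sInf SP ^ p ≤ ((X₀.norm b₀) ^ (1/p) + (t * X₁.norm b₁) ^ (1/p)) ^ p :=
        Real.rpow_le_rpow hKpnn (h1.trans h2) hp0.le
      exact h3.trans (mal_two_ineq hR₀ (mul_nonneg ht.le hR₁) hp)
    have h2p : (0:ℝ) < 2 ^ (p-1) := Real.rpow_pos_of_pos (by norm_num) _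
    have h5 : sInf SP ^ p ≤ 2 ^ (p-1) * sInf SK := by
      have hdiv : sInf SP ^ p / 2 ^ (p-1) ≤ sInf SK := by
        apply le_csInf hSKne
        intro r hr
        rw [div_le_iff₀ h2p]
        calc sInf SP ^ p ≤ 2 ^ (p-1) * r := step r hr
          _ = r * 2 ^ (p-1) := by ring
      rw [div_le_iff₀ h2p] at hdiv
      linarith
  -- conclude
    have h6 : sInf SP = (sInf SP ^ p) ^ (1/p) := (mal_rpow_rpow_inv hKpnn hpne).symm
    rw [h6]
    calc (sInf SP ^ p) ^ (1/p) ≤ (2 ^ (p-1) * sInf SK) ^ (1/p) :=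
          Real.rpow_le_rpow (Real.rpow_nonneg hKpnn _) h5 hip.le
      _ = 2 ^ (1 - 1/p) * sInf SK ^ (1/p) := by
          rw [Real.mul_rpow h2p.le hKnn, ← Real.rpow_mul (by norm_num : (0:ℝ) ≤ 2),
            show (p-1) * (1/p) = 1 - 1/p by field_simp]
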